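/- Fix n ≥ 1 and let S ⊆ ℕ^{2n} be the submonoid of vectors a with Σ_{i=1}^{n}(a_{2i-1} + 2a_{2i}) ≡ 0 (mod 3). Each of the elements e*_{2i} + e*_{2j-1}, e*_{2i} + e*_{2j} + e*_{2k}, and e*_{2i-1} + e*_{2j-1} + e*_{2k-1} is irreducible in S, i.e., cannot be written as a sum of two nonzero elements of S. -/

import Mathlib

private def wt (n : ℕ) (a : Fin (2 * n) → ℕ) : ℕ :=
  ∑ i : Fin n, (a ⟨2 * i.1, by have := i.2; linarith⟩ + 2 * a ⟨2 * i.1 + 1, by have := i.2; linarith⟩)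

private lemma wt_add (n : ℕ) (x y : Fin (2 * n) → ℕ) :
    wt n (x + y) = wt n x + wt n y := by
  unfold wt
  rw [← Finset.sum_add_distrib]
  congr 1; ext i; simp [Pi.add_apply]; ring

private lemma wt_eq_zero (n : ℕ) (x : Fin (2 * n) → ℕ) (h : wt n x = 0) : x = 0 := by
  unfold wt at h
  rw [Finset.sum_eq_zero_iff] at h
  funext q
  have hq := q.2
  have hm : q.1 / 2 < n := by omega
  have := h ⟨q.1 / 2, hm⟩ (Finset.mem_univ _)
  simp only [Fin.val_mk] at this
  rcases Nat.even_or_odd q.1 with he | ho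
  · obtain ⟨m, hm'⟩ := he
    have hq' : q = ⟨2 * (q.1/2), by omega⟩ := by ext; simp; omega
    rw [hq']
    simp only [Pi.zero_apply]
    omega
  · obtain ⟨m, hm'⟩ := ho
    have hq' : q = ⟨2 * (q.1/2) + 1, by omega⟩ := by ext; simp; omega
    rw [hq']
    simp only [Pi.zero_apply]
    omega

private lemma wt_single_even (n : ℕ) (i : Fin n) :
    wt n (Pi.single (⟨2 * i.1, by have := i.2; linarith⟩ : Fin (2 * n)) 1) = 1 := by
  unfold wt
  rw [Fintype.sum_eq_single i]
  · simp [Pi.single_apply, Fin.ext_iff]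
  · intro j hj
    have : j.1 ≠ i.1 := fun h => hj (Fin.ext h)
    simp [Pi.single_apply, Fin.ext_iff]
    omega

private lemma wt_single_odd (n : ℕ) (i : Fin n) :
    wt n (Pi.single (⟨2 * i.1 + 1, by have := i.2; linarith⟩ : Fin (2 * n)) 1) = 2 := by
  unfold wt
  rw [Fintype.sum_eq_single i]
  · simp [Pi.single_apply, Fin.ext_iff]
  · intro j hj
    have : j.1 ≠ i.1 := fun h => hj (Fin.ext h)
    simp [Pi.single_apply, Fin.ext_iff]
    omega

private lemma wt_even (n : ℕ) (x : Fin (2 * n) → ℕ)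
    (h : ∀ m : Fin n, x ⟨2 * m.1, by have := m.2; linarith⟩ = 0) : 2 ∣ wt n x := by
  unfold wt
  apply Finset.dvd_sum
  intro i _
  rw [h i]
  simp

/-- In the monoid `S = {a ∈ ℕ^{2n} : 3 ∣ Σᵢ (a_{2i-1} + 2 a_{2i})}`, each of the elements
`e*_{2i} + e*_{2j-1}`, `e*_{2i} + e*_{2j} + e*_{2k}` and `e*_{2i-1} + e*_{2j-1} + e*_{2k-1}`
is irreducible: it is nonzero and cannot be written as a sum of two nonzero elements of `S`.
(0-based: `e*_{2i}` is `Pi.single ⟨2i+1⟩ 1` and `e*_{2i-1}` is `Pi.single ⟨2i⟩ 1`.) -/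
theorem stmt_6 (n : ℕ) (hn : 1 ≤ n)
    (S : Set (Fin (2 * n) → ℕ))
    (hS : S = {a | (∑ i : Fin n, (a ⟨2 * i.1, by have := i.2; omega⟩ +
        2 * a ⟨2 * i.1 + 1, by have := i.2; omega⟩)) % 3 = 0})
    (G : Set (Fin (2 * n) → ℕ))
    (hG : G = {x | (∃ i j : Fin n, x =
        Pi.single ⟨2 * i.1 + 1, by have := i.2; omega⟩ 1 +
        Pi.single ⟨2 * j.1, by have := j.2; omega⟩ 1) ∨
      (∃ i j k : Fin n, x =
        Pi.single ⟨2 * i.1 + 1, by have := i.2; omega⟩ 1 +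
        Pi.single ⟨2 * j.1 + 1, by have := j.2; omega⟩ 1 +
        Pi.single ⟨2 * k.1 + 1, by have := k.2; omega⟩ 1) ∨
      (∃ i j k : Fin n, x =
        Pi.single ⟨2 * i.1, by have := i.2; omega⟩ 1 +
        Pi.single ⟨2 * j.1, by have := j.2; omega⟩ 1 +
        Pi.single ⟨2 * k.1, by have := k.2; omega⟩ 1)}) :
    ∀ g ∈ G, g ≠ 0 ∧ ∀ x ∈ S, ∀ y ∈ S, g = x + y → x = 0 ∨ y = 0 := by
  subst hS hG
  intro g hg
  have hSwt : ∀ a ∈ {a : Fin (2*n) → ℕ | (∑ i : Fin n, (a ⟨2 * i.1, by have := i.2; omega⟩ +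
        2 * a ⟨2 * i.1 + 1, by have := i.2; omega⟩)) % 3 = 0}, wt n a % 3 = 0 := by
    intro a ha; exact ha
  rcases hg with ⟨i, j, rfl⟩ | ⟨i, j, k, rfl⟩ | ⟨i, j, k, rfl⟩
  · have hw : wt n (Pi.single (⟨2 * i.1 + 1, by have := i.2; omega⟩ : Fin (2*n)) 1 +
        Pi.single (⟨2 * j.1, by have := j.2; omega⟩ : Fin (2*n)) 1) = 3 := by
      rw [wt_add, wt_single_odd, wt_single_even]
    refine ⟨fun h0 => by rw [h0] at hw; simp [wt] at hw, ?_⟩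
    intro x hx y hy hxy
    have hx3 := hSwt x hx
    have hy3 := hSwt y hy
    have : wt n x + wt n y = 3 := by rw [← wt_add, ← hxy, hw]
    have : wt n x = 0 ∨ wt n y = 0 := by omega
    rcases this with h | h
    · exact Or.inl (wt_eq_zero n x h)
    · exact Or.inr (wt_eq_zero n y h)
  · have hw : wt n (Pi.single (⟨2 * i.1 + 1, by have := i.2; omega⟩ : Fin (2*n)) 1 +
        Pi.single (⟨2 * j.1 + 1, by have := j.2; omega⟩ : Fin (2*n)) 1 +
        Pi.single (⟨2 * k.1 + 1, by have := k.2; omega⟩ : Fin (2*n)) 1) = 6 := by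
      rw [wt_add, wt_add, wt_single_odd, wt_single_odd, wt_single_odd]
    refine ⟨fun h0 => by rw [h0] at hw; simp [wt] at hw, ?_⟩
    intro x hx y hy hxy
    have hx3 := hSwt x hx
    have hy3 := hSwt y hy
    have hsum : wt n x + wt n y = 6 := by rw [← wt_add, ← hxy, hw]
    by_contra hc
    push_neg at hc
    obtain ⟨hx0, hy0⟩ := hc
    have hxne : wt n x ≠ 0 := fun h => hx0 (wt_eq_zero n x h)
    have hyne : wt n y ≠ 0 := fun h => hy0 (wt_eq_zero n y h)
    have hx3' : wt n x = 3 := by omega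
    have hzero : ∀ m : Fin n, x ⟨2 * m.1, by have := m.2; omega⟩ = 0 := by
      intro m
      have := congrFun hxy ⟨2 * m.1, by have := m.2; omega⟩
      simp only [Pi.add_apply, Pi.single_apply] at this
      have hi : (⟨2 * m.1, by have := m.2; omega⟩ : Fin (2*n)) ≠ ⟨2 * i.1 + 1, by have := i.2; omega⟩ := by
        simp [Fin.ext_iff]; omega
      have hj : (⟨2 * m.1, by have := m.2; omega⟩ : Fin (2*n)) ≠ ⟨2 * j.1 + 1, by have := j.2; omega⟩ := by
        simp [Fin.ext_iff]; omega
      have hk : (⟨2 * m.1, by have := m.2; omega⟩ : Fin (2*n)) ≠ ⟨2 * k.1 + 1, by have := k.2; omega⟩ := by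
        simp [Fin.ext_iff]; omega
      rw [if_neg hi, if_neg hj, if_neg hk] at this
      omega
    have := wt_even n x hzero
    omega
  · have hw : wt n (Pi.single (⟨2 * i.1, by have := i.2; omega⟩ : Fin (2*n)) 1 +
        Pi.single (⟨2 * j.1, by have := j.2; omega⟩ : Fin (2*n)) 1 +
        Pi.single (⟨2 * k.1, by have := k.2; omega⟩ : Fin (2*n)) 1) = 3 := by
      rw [wt_add, wt_add, wt_single_even, wt_single_even, wt_single_even]
    refine ⟨fun h0 => by rw [h0] at hw; simp [wt] at hw, ?_⟩
    intro x hx y hy hxy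
    have hx3 := hSwt x hx
    have hy3 := hSwt y hy
    have : wt n x + wt n y = 3 := by rw [← wt_add, ← hxy, hw]
    have : wt n x = 0 ∨ wt n y = 0 := by omega
    rcases this with h | h
    · exact Or.inl (wt_eq_zero n x h)
    · exact Or.inr (wt_eq_zero n y h)
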